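/- For every x ∈ W2, G(x) = 2. -/
import Mathlib


/-- `w a b δ n = n + a⌊n/a⌋ + b⌊n/δ⌋`. -/
def w (a b δ n : ℕ) : ℕ := n + a * (n / a) + b * (n / δ)

/-- `W0` is the image of `w`. -/
def W0 (a b δ : ℕ) : Set ℕ := Set.range (w a b δ)

/-- `W2 = {x : x + b ∈ W0}`. -/
def W2 (a b δ : ℕ) : Set ℕ := {x | x + b ∈ W0 a b δ}

/-- `mex T` is the least natural number not in `T`. -/
noncomputable def mex (T : Set ℕ) : ℕ := sInf {n | n ∉ T}

private lemma wge (a b δ n : ℕ) : n ≤ w a b δ n := by unfold w; omega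

private lemma w0 (a b δ : ℕ) : w a b δ 0 = 0 := by simp [w]

private lemma wle (a b δ : ℕ) {m n : ℕ} (h : m ≤ n) : w a b δ m ≤ w a b δ n := by
  have h1 : m / a ≤ n / a := Nat.div_le_div_right h
  have h2 : m / δ ≤ n / δ := Nat.div_le_div_right h
  have e1 : a * (m/a) ≤ a * (n/a) := Nat.mul_le_mul le_rfl h1
  have e2 : b * (m/δ) ≤ b * (n/δ) := Nat.mul_le_mul le_rfl h2
  unfold w; omega

private lemma wdiff (a δ : ℕ) (b m n : ℕ) (hmn : m ≤ n) :
    ∃ d1 d2 : ℕ, w a b δ n = w a b δ m + (n - m) + a * d1 + b * d2 ∧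
      a * d1 + n % a = (n - m) + m % a ∧ δ * d2 + n % δ = (n - m) + m % δ := by
  refine ⟨n / a - m / a, n / δ - m / δ, ?_, ?_, ?_⟩ <;>
  · have h1 : m / a ≤ n / a := Nat.div_le_div_right hmn
    have h2 : m / δ ≤ n / δ := Nat.div_le_div_right hmn
    have e1 : a * (n / a) = a * (m / a) + a * (n / a - m / a) := by
      rw [← Nat.mul_add]; congr 1; omega
    have e2 : δ * (n / δ) = δ * (m / δ) + δ * (n / δ - m / δ) := by
      rw [← Nat.mul_add]; congr 1; omega
    have e3 : b * (n / δ) = b * (m / δ) + b * (n / δ - m / δ) := by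
      rw [← Nat.mul_add]; congr 1; omega
    have q1 := Nat.div_add_mod m a; have q2 := Nat.div_add_mod n a
    have q3 := Nat.div_add_mod m δ; have q4 := Nat.div_add_mod n δ
    try unfold w
    omega

private lemma exists_interval (a b δ : ℕ) (x : ℕ) :
    ∃ n, w a b δ n ≤ x ∧ x < w a b δ (n + 1) := by
  have hne : {n | x < w a b δ n}.Nonempty :=
    ⟨x + 1, lt_of_lt_of_le (Nat.lt_succ_self x) (wge a b δ (x+1))⟩
  have hmem := Nat.sInf_mem hne
  have h0 : sInf {n | x < w a b δ n} ≠ 0 := by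
    intro h; rw [h] at hmem; simp only [Set.mem_setOf_eq, w0] at hmem; omega
  refine ⟨sInf {n | x < w a b δ n} - 1, ?_, ?_⟩
  · by_contra hc
    push_neg at hc
    have := Nat.sInf_le (show (sInf {n | x < w a b δ n} - 1) ∈ {n | x < w a b δ n} from hc)
    omega
  · have : sInf {n | x < w a b δ n} - 1 + 1 = sInf {n | x < w a b δ n} := by omega
    rw [this]; exact hmem

private lemma no_diff (a δ : ℕ) (ha : 0 < a) (had : a < δ) (hd2 : δ < 2 * a)
    (m n s : ℕ) (hs : s = a ∨ s = a + δ ∨ s = a + (a + δ)) :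
    w a (a+δ) δ m + s ≠ w a (a+δ) δ n := by
  intro heq
  have hmn : m ≤ n := by
    by_contra hc
    push_neg at hc
    have := wle a (a+δ) δ (le_of_lt hc)
    omega
  obtain ⟨d1, d2, hw, hA, hB⟩ := wdiff a δ (a+δ) m n hmn
  have hma : m % a < a := Nat.mod_lt _ ha
  have hna : n % a < a := Nat.mod_lt _ ha
  have hmd : m % δ < δ := Nat.mod_lt _ (by omega)
  have hnd : n % δ < δ := Nat.mod_lt _ (by omega)
  have hb1 : d1 < 4 := lt_of_mul_lt_mul_left (show a * d1 < a * 4 by omega) (Nat.zero_le a)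
  have hb2 : d2 < 2 := lt_of_mul_lt_mul_left
    (show (a+δ) * d2 < (a+δ) * 2 by omega) (Nat.zero_le (a+δ))
  have c1 : d1 = 0 ∨ d1 = 1 ∨ d1 = 2 ∨ d1 = 3 := by omega
  have c2 : d2 = 0 ∨ d2 = 1 := by omega
  rcases c1 with rfl|rfl|rfl|rfl <;> rcases c2 with rfl|rfl <;> omega

private lemma exists_move (a δ : ℕ) (ha : 0 < a) (had : a < δ) (hd2 : δ < 2 * a)
    (x : ℕ) (hx : ∀ n, w a (a+δ) δ n ≠ x) :
    ∃ m s, (s = a ∨ s = a + δ ∨ s = a + (a + δ)) ∧ w a (a+δ) δ m + s = x := by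
  have hd : 0 < δ := by omega
  obtain ⟨n, hn1, hn2⟩ := exists_interval a (a+δ) δ x
  obtain ⟨r, hr⟩ : ∃ r, x = w a (a+δ) δ n + r := ⟨x - w a (a+δ) δ n, by omega⟩
  obtain ⟨e1, e2, hge, hgA, hgB⟩ := wdiff a δ (a+δ) n (n+1) (Nat.le_succ n)
  have hg1 : (n + 1) - n = 1 := by omega
  rw [hg1] at hge hgA hgB
  have hna : n % a < a := Nat.mod_lt _ ha
  have hnd : n % δ < δ := Nat.mod_lt _ hd
  have hna2 : (n+1) % a < a := Nat.mod_lt _ ha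
  have hnd2 : (n+1) % δ < δ := Nat.mod_lt _ hd
  have hmla : n % a ≤ n := Nat.mod_le n a
  have hmld : n % δ ≤ n := Nat.mod_le n δ
  have hxn := hx n
  have hr1 : 1 ≤ r := by omega
  have hb1 : e1 < 2 := lt_of_mul_lt_mul_left (show a * e1 < a * 2 by omega) (Nat.zero_le a)
  have hb2 : e2 < 2 := lt_of_mul_lt_mul_left (show δ * e2 < δ * 2 by omega) (Nat.zero_le δ)
  rcases (by omega : e1 = 0 ∨ e1 = 1) with rfl|rfl <;>
    rcases (by omega : e2 = 0 ∨ e2 = 1) with rfl|rfl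
  · -- gap 1 : contradiction
    exfalso; omega
  · -- type B : v = δ - 1
    rcases (by omega : (r + n % a + 1 ≤ δ) ∨ (δ ≤ r + n % a ∧ r ≤ a) ∨ (a + 1 ≤ r ∧ δ ≤ r + n % a)) with ⟨hcb⟩|⟨hcb1, hcb2⟩|⟨hcb1, hcb2⟩
    obtain ⟨K, hK⟩ : ∃ K, K + r = δ := ⟨δ - r, by omega⟩
    obtain ⟨m, hm⟩ : ∃ m, n = m + K := ⟨n - K, by omega⟩
    obtain ⟨d1, d2, hw2, hA2, hB2⟩ := wdiff a δ (a+δ) m n (by omega)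
    have hnm : n - m = K := by omega
    rw [hnm] at hw2 hA2 hB2
    have hka : m % a < a := Nat.mod_lt _ ha
    have hkd : m % δ < δ := Nat.mod_lt _ hd
    have hc1 : d1 < 3 := lt_of_mul_lt_mul_left (show a * d1 < a * 3 by omega) (Nat.zero_le a)
    have hc2 : d2 < 2 := lt_of_mul_lt_mul_left (show δ * d2 < δ * 2 by omega) (Nat.zero_le δ)
    refine ⟨m, r + K + a * d1 + (a + δ) * d2, ?_, by omega⟩
    rcases (by omega : d1 = 0 ∨ d1 = 1 ∨ d1 = 2) with rfl|rfl|rfl <;>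
      rcases (by omega : d2 = 0 ∨ d2 = 1) with rfl|rfl <;> omega
    obtain ⟨K, hK⟩ : ∃ K, K + r = a := ⟨a - r, by omega⟩
    obtain ⟨m, hm⟩ : ∃ m, n = m + K := ⟨n - K, by omega⟩
    obtain ⟨d1, d2, hw2, hA2, hB2⟩ := wdiff a δ (a+δ) m n (by omega)
    have hnm : n - m = K := by omega
    rw [hnm] at hw2 hA2 hB2
    have hka : m % a < a := Nat.mod_lt _ ha
    have hkd : m % δ < δ := Nat.mod_lt _ hd
    have hc1 : d1 < 3 := lt_of_mul_lt_mul_left (show a * d1 < a * 3 by omega) (Nat.zero_le a)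
    have hc2 : d2 < 2 := lt_of_mul_lt_mul_left (show δ * d2 < δ * 2 by omega) (Nat.zero_le δ)
    refine ⟨m, r + K + a * d1 + (a + δ) * d2, ?_, by omega⟩
    rcases (by omega : d1 = 0 ∨ d1 = 1 ∨ d1 = 2) with rfl|rfl|rfl <;>
      rcases (by omega : d2 = 0 ∨ d2 = 1) with rfl|rfl <;> omega
    obtain ⟨K, hK⟩ : ∃ K, K + r = a + δ := ⟨a + δ - r, by omega⟩
    obtain ⟨m, hm⟩ : ∃ m, n = m + K := ⟨n - K, by omega⟩
    obtain ⟨d1, d2, hw2, hA2, hB2⟩ := wdiff a δ (a+δ) m n (by omega)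
    have hnm : n - m = K := by omega
    rw [hnm] at hw2 hA2 hB2
    have hka : m % a < a := Nat.mod_lt _ ha
    have hkd : m % δ < δ := Nat.mod_lt _ hd
    have hc1 : d1 < 3 := lt_of_mul_lt_mul_left (show a * d1 < a * 3 by omega) (Nat.zero_le a)
    have hc2 : d2 < 2 := lt_of_mul_lt_mul_left (show δ * d2 < δ * 2 by omega) (Nat.zero_le δ)
    refine ⟨m, r + K + a * d1 + (a + δ) * d2, ?_, by omega⟩
    rcases (by omega : d1 = 0 ∨ d1 = 1 ∨ d1 = 2) with rfl|rfl|rfl <;>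
      rcases (by omega : d2 = 0 ∨ d2 = 1) with rfl|rfl <;> omega
  · -- type A : u = a - 1
    obtain ⟨K, hK⟩ : ∃ K, K + r = a := ⟨a - r, by omega⟩
    obtain ⟨m, hm⟩ : ∃ m, n = m + K := ⟨n - K, by omega⟩
    obtain ⟨d1, d2, hw2, hA2, hB2⟩ := wdiff a δ (a+δ) m n (by omega)
    have hnm : n - m = K := by omega
    rw [hnm] at hw2 hA2 hB2
    have hka : m % a < a := Nat.mod_lt _ ha
    have hkd : m % δ < δ := Nat.mod_lt _ hd
    have hc1 : d1 < 3 := lt_of_mul_lt_mul_left (show a * d1 < a * 3 by omega) (Nat.zero_le a)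
    have hc2 : d2 < 2 := lt_of_mul_lt_mul_left (show δ * d2 < δ * 2 by omega) (Nat.zero_le δ)
    refine ⟨m, r + K + a * d1 + (a + δ) * d2, ?_, by omega⟩
    rcases (by omega : d1 = 0 ∨ d1 = 1 ∨ d1 = 2) with rfl|rfl|rfl <;>
      rcases (by omega : d2 = 0 ∨ d2 = 1) with rfl|rfl <;> omega
  · -- type AB
    rcases (by omega : (r ≤ a) ∨ (a + 1 ≤ r ∧ r ≤ a + δ) ∨ (a + δ + 1 ≤ r)) with ⟨hcb⟩|⟨hcb1, hcb2⟩|⟨hcb⟩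
    obtain ⟨K, hK⟩ : ∃ K, K + r = a := ⟨a - r, by omega⟩
    obtain ⟨m, hm⟩ : ∃ m, n = m + K := ⟨n - K, by omega⟩
    obtain ⟨d1, d2, hw2, hA2, hB2⟩ := wdiff a δ (a+δ) m n (by omega)
    have hnm : n - m = K := by omega
    rw [hnm] at hw2 hA2 hB2
    have hka : m % a < a := Nat.mod_lt _ ha
    have hkd : m % δ < δ := Nat.mod_lt _ hd
    have hc1 : d1 < 3 := lt_of_mul_lt_mul_left (show a * d1 < a * 3 by omega) (Nat.zero_le a)
    have hc2 : d2 < 2 := lt_of_mul_lt_mul_left (show δ * d2 < δ * 2 by omega) (Nat.zero_le δ)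
    refine ⟨m, r + K + a * d1 + (a + δ) * d2, ?_, by omega⟩
    rcases (by omega : d1 = 0 ∨ d1 = 1 ∨ d1 = 2) with rfl|rfl|rfl <;>
      rcases (by omega : d2 = 0 ∨ d2 = 1) with rfl|rfl <;> omega
    obtain ⟨K, hK⟩ : ∃ K, K + r = a + δ := ⟨a + δ - r, by omega⟩
    obtain ⟨m, hm⟩ : ∃ m, n = m + K := ⟨n - K, by omega⟩
    obtain ⟨d1, d2, hw2, hA2, hB2⟩ := wdiff a δ (a+δ) m n (by omega)
    have hnm : n - m = K := by omega
    rw [hnm] at hw2 hA2 hB2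
    have hka : m % a < a := Nat.mod_lt _ ha
    have hkd : m % δ < δ := Nat.mod_lt _ hd
    have hc1 : d1 < 3 := lt_of_mul_lt_mul_left (show a * d1 < a * 3 by omega) (Nat.zero_le a)
    have hc2 : d2 < 2 := lt_of_mul_lt_mul_left (show δ * d2 < δ * 2 by omega) (Nat.zero_le δ)
    refine ⟨m, r + K + a * d1 + (a + δ) * d2, ?_, by omega⟩
    rcases (by omega : d1 = 0 ∨ d1 = 1 ∨ d1 = 2) with rfl|rfl|rfl <;>
      rcases (by omega : d2 = 0 ∨ d2 = 1) with rfl|rfl <;> omega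
    obtain ⟨K, hK⟩ : ∃ K, K + r = a + (a + δ) := ⟨a + (a + δ) - r, by omega⟩
    obtain ⟨m, hm⟩ : ∃ m, n = m + K := ⟨n - K, by omega⟩
    obtain ⟨d1, d2, hw2, hA2, hB2⟩ := wdiff a δ (a+δ) m n (by omega)
    have hnm : n - m = K := by omega
    rw [hnm] at hw2 hA2 hB2
    have hka : m % a < a := Nat.mod_lt _ ha
    have hkd : m % δ < δ := Nat.mod_lt _ hd
    have hc1 : d1 < 3 := lt_of_mul_lt_mul_left (show a * d1 < a * 3 by omega) (Nat.zero_le a)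
    have hc2 : d2 < 2 := lt_of_mul_lt_mul_left (show δ * d2 < δ * 2 by omega) (Nat.zero_le δ)
    refine ⟨m, r + K + a * d1 + (a + δ) * d2, ?_, by omega⟩
    rcases (by omega : d1 = 0 ∨ d1 = 1 ∨ d1 = 2) with rfl|rfl|rfl <;>
      rcases (by omega : d2 = 0 ∨ d2 = 1) with rfl|rfl <;> omega

private lemma exists_one_move (a δ : ℕ) (ha : 0 < a) (had : a < δ) (hd2 : δ < 2 * a)
    (x M : ℕ) (hM : w a (a+δ) δ M = x + (a + δ)) :
    ∃ m s, (s = a ∨ s = a + δ ∨ s = a + (a + δ)) ∧ w a (a+δ) δ m + s + a = x := by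
  have hd : 0 < δ := by omega
  have hMa : M % a < a := Nat.mod_lt _ ha
  have hMd : M % δ < δ := Nat.mod_lt _ hd
  have hMδ : δ ≤ M := by
    by_contra hc
    push_neg at hc
    have h1 : M / δ = 0 := Nat.div_eq_of_lt hc
    have h2 : M / a < 2 := (Nat.div_lt_iff_lt_mul ha).2 (by omega)
    have h3 : a * (M / a) ≤ a * 1 := Nat.mul_le_mul le_rfl (by omega)
    have hM2 := hM
    unfold w at hM2
    rw [h1] at hM2
    omega
  rcases (by omega : (M % δ + 1 ≤ a) ∨ (a ≤ M % δ ∧ M % a + a + 1 ≤ δ) ∨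
      (a ≤ M % δ ∧ δ ≤ M % a + a)) with ⟨hv⟩|⟨hv, hu⟩|⟨hv, hu⟩
  · -- K = a, s = a
    obtain ⟨m, hm⟩ : ∃ m, M = m + a := ⟨M - a, by omega⟩
    obtain ⟨d1, d2, hw, hA, hB⟩ := wdiff a δ (a+δ) m M (by omega)
    have hnm : M - m = a := by omega
    rw [hnm] at hw hA hB
    have h1 : m % a < a := Nat.mod_lt _ ha
    have h2 : m % δ < δ := Nat.mod_lt _ hd
    have hc1 : d1 < 2 := lt_of_mul_lt_mul_left (show a * d1 < a * 2 by omega) (Nat.zero_le a)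
    have hc2 : d2 < 2 := lt_of_mul_lt_mul_left (show δ * d2 < δ * 2 by omega) (Nat.zero_le δ)
    refine ⟨m, a, Or.inl rfl, ?_⟩
    rcases (by omega : d1 = 0 ∨ d1 = 1) with rfl|rfl <;>
      rcases (by omega : d2 = 0 ∨ d2 = 1) with rfl|rfl <;> omega
  · -- K = δ, s = a + δ
    obtain ⟨m, hm⟩ : ∃ m, M = m + δ := ⟨M - δ, by omega⟩
    obtain ⟨d1, d2, hw, hA, hB⟩ := wdiff a δ (a+δ) m M (by omega)
    have hnm : M - m = δ := by omega
    rw [hnm] at hw hA hB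
    have h1 : m % a < a := Nat.mod_lt _ ha
    have h2 : m % δ < δ := Nat.mod_lt _ hd
    have hc1 : d1 < 3 := lt_of_mul_lt_mul_left (show a * d1 < a * 3 by omega) (Nat.zero_le a)
    have hc2 : d2 < 2 := lt_of_mul_lt_mul_left (show δ * d2 < δ * 2 by omega) (Nat.zero_le δ)
    refine ⟨m, a + δ, Or.inr (Or.inl rfl), ?_⟩
    rcases (by omega : d1 = 0 ∨ d1 = 1 ∨ d1 = 2) with rfl|rfl|rfl <;>
      rcases (by omega : d2 = 0 ∨ d2 = 1) with rfl|rfl <;> omega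
  · -- K = a + δ, s = a + (a + δ)
    have hq : 1 ≤ M / δ := (Nat.one_le_div_iff hd).2 hMδ
    have hq2 : δ * 1 ≤ δ * (M / δ) := Nat.mul_le_mul le_rfl hq
    have hq3 := Nat.div_add_mod M δ
    obtain ⟨m, hm⟩ : ∃ m, M = m + (a + δ) := ⟨M - (a + δ), by omega⟩
    obtain ⟨d1, d2, hw, hA, hB⟩ := wdiff a δ (a+δ) m M (by omega)
    have hnm : M - m = a + δ := by omega
    rw [hnm] at hw hA hB
    have h1 : m % a < a := Nat.mod_lt _ ha
    have h2 : m % δ < δ := Nat.mod_lt _ hd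
    have hc1 : d1 < 4 := lt_of_mul_lt_mul_left (show a * d1 < a * 4 by omega) (Nat.zero_le a)
    have hc2 : d2 < 2 := lt_of_mul_lt_mul_left (show δ * d2 < δ * 2 by omega) (Nat.zero_le δ)
    refine ⟨m, a + (a + δ), Or.inr (Or.inr rfl), ?_⟩
    rcases (by omega : d1 = 0 ∨ d1 = 1 ∨ d1 = 2 ∨ d1 = 3) with rfl|rfl|rfl|rfl <;>
      rcases (by omega : d2 = 0 ∨ d2 = 1) with rfl|rfl <;> omega

private lemma q4 (a δ : ℕ) (ha : 0 < a) (had : a < δ) (hd2 : δ < 2 * a)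
    (x m s : ℕ) (hs : s = 2 * a ∨ s = 2 * a + δ ∨ s = 3 * a + δ)
    (hsum : w a (a+δ) δ m + s = x)
    (hx : ∀ n, w a (a+δ) δ n ≠ x)
    (hxb : ∀ n, w a (a+δ) δ n ≠ x + (a + δ)) :
    ∃ n, w a (a+δ) δ n = x + δ := by
  have hd : 0 < δ := by omega
  have hma : m % a < a := Nat.mod_lt _ ha
  have hmd : m % δ < δ := Nat.mod_lt _ hd
  obtain ⟨d1, d2, hw1, hA1, hB1⟩ := wdiff a δ (a+δ) m (m+a) (Nat.le_add_right m a)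
  have hg1 : (m + a) - m = a := by omega
  rw [hg1] at hw1 hA1 hB1
  have h1a : (m+a) % a < a := Nat.mod_lt _ ha
  have h1d : (m+a) % δ < δ := Nat.mod_lt _ hd
  have hc1 : d1 < 2 := lt_of_mul_lt_mul_left (show a * d1 < a * 2 by omega) (Nat.zero_le a)
  have hc2 : d2 < 2 := lt_of_mul_lt_mul_left (show δ * d2 < δ * 2 by omega) (Nat.zero_le δ)
  have hd1 : d1 = 1 := by
    rcases (by omega : d1 = 0 ∨ d1 = 1) with rfl|rfl <;> omega
  subst hd1
  rcases hs with rfl|rfl|rfl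
  · -- s = 2a : impossible
    exfalso
    rcases (by omega : d2 = 0 ∨ d2 = 1) with rfl|rfl
    · exact hx (m+a) (by omega)
    · exact hxb (m+a) (by omega)
  · -- s = 2a + δ
    obtain ⟨e1, e2, hw2, hA2, hB2⟩ := wdiff a δ (a+δ) m (m+δ) (Nat.le_add_right m δ)
    have hg2 : (m + δ) - m = δ := by omega
    rw [hg2] at hw2 hA2 hB2
    have h2a : (m+δ) % a < a := Nat.mod_lt _ ha
    have h2d : (m+δ) % δ < δ := Nat.mod_lt _ hd
    have hcc1 : e1 < 3 := lt_of_mul_lt_mul_left (show a * e1 < a * 3 by omega) (Nat.zero_le a)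
    have hcc2 : e2 < 2 := lt_of_mul_lt_mul_left (show δ * e2 < δ * 2 by omega) (Nat.zero_le δ)
    rcases (by omega : e2 = 0 ∨ e2 = 1) with rfl|rfl
    · exfalso; omega
    rcases (by omega : e1 = 0 ∨ e1 = 1 ∨ e1 = 2) with rfl|rfl|rfl
    · exfalso; omega
    · exact ⟨m + δ, by omega⟩
    · exact absurd (show w a (a+δ) δ (m+δ) = x + (a+δ) by omega) (hxb (m+δ))
  · -- s = 3a + δ
    have hv : d2 = 0 := by
      rcases (by omega : d2 = 0 ∨ d2 = 1) with rfl|rfl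
      · rfl
      · exact absurd (show w a (a+δ) δ (m+a) = x by omega) (hx (m+a))
    subst hv
    obtain ⟨e1, e2, hw2, hA2, hB2⟩ := wdiff a δ (a+δ) m (m+δ) (Nat.le_add_right m δ)
    have hg2 : (m + δ) - m = δ := by omega
    rw [hg2] at hw2 hA2 hB2
    have h2a : (m+δ) % a < a := Nat.mod_lt _ ha
    have h2d : (m+δ) % δ < δ := Nat.mod_lt _ hd
    have hcc1 : e1 < 3 := lt_of_mul_lt_mul_left (show a * e1 < a * 3 by omega) (Nat.zero_le a)
    have hcc2 : e2 < 2 := lt_of_mul_lt_mul_left (show δ * e2 < δ * 2 by omega) (Nat.zero_le δ)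
    rcases (by omega : e2 = 0 ∨ e2 = 1) with rfl|rfl
    · exfalso; omega
    rcases (by omega : e1 = 0 ∨ e1 = 1 ∨ e1 = 2) with rfl|rfl|rfl
    · exfalso; omega
    · -- e1 = 1 : derive contradiction via m + (a+δ)
      exfalso
      obtain ⟨f1, f2, hw3, hA3, hB3⟩ := wdiff a δ (a+δ) m (m+(a+δ)) (Nat.le_add_right m (a+δ))
      have hg3 : (m + (a+δ)) - m = a + δ := by omega
      rw [hg3] at hw3 hA3 hB3
      have h3a : (m+(a+δ)) % a < a := Nat.mod_lt _ ha
      have h3d : (m+(a+δ)) % δ < δ := Nat.mod_lt _ hd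
      have hf1 : f1 < 4 := lt_of_mul_lt_mul_left (show a * f1 < a * 4 by omega) (Nat.zero_le a)
      have hf2 : f2 < 2 := lt_of_mul_lt_mul_left (show δ * f2 < δ * 2 by omega) (Nat.zero_le δ)
      rcases (by omega : f2 = 0 ∨ f2 = 1) with rfl|rfl
      · omega
      rcases (by omega : f1 = 0 ∨ f1 = 1 ∨ f1 = 2 ∨ f1 = 3) with rfl|rfl|rfl|rfl
      · omega
      · omega
      · exact hxb (m+(a+δ)) (by omega)
      · omega
    · exact ⟨m + δ, by omega⟩

/-- If `G` is the Grundy function of the subtraction game with moves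
`S = {a, b, a+b}`, then `G x = 2` for every `x ∈ W2`. -/
theorem stmt_17 (a δ : ℕ) (ha : 0 < a) (hlt : a < δ) (hlt2 : δ < 2 * a)
    (hgcd : Nat.gcd a δ = 1) (b : ℕ) (hb : b = a + δ)
    (G : ℕ → ℕ)
    (hG : ∀ x, G x = mex {v | ∃ s ∈ ({a, b, a + b} : Set ℕ), s ≤ x ∧ v = G (x - s)}) :
    ∀ x ∈ W2 a b δ, G x = 2 := by
  subst hb
  have hd : 0 < δ := by omega
  -- membership in the option-value set, unfolded
  have hT : ∀ x v : ℕ,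
      (v ∈ {v | ∃ s ∈ ({a, a + δ, a + (a + δ)} : Set ℕ), s ≤ x ∧ v = G (x - s)}) ↔
      ((a ≤ x ∧ v = G (x - a)) ∨ (a + δ ≤ x ∧ v = G (x - (a + δ))) ∨
        (a + (a + δ) ≤ x ∧ v = G (x - (a + (a + δ))))) := by
    intro x v
    constructor
    · rintro ⟨s, hs, h1, h2⟩
      simp only [Set.mem_insert_iff, Set.mem_singleton_iff] at hs
      rcases hs with rfl|rfl|rfl
      exacts [Or.inl ⟨h1, h2⟩, Or.inr (Or.inl ⟨h1, h2⟩), Or.inr (Or.inr ⟨h1, h2⟩)]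
    · rintro (⟨h1, h2⟩|⟨h1, h2⟩|⟨h1, h2⟩)
      exacts [⟨a, by simp, h1, h2⟩, ⟨a + δ, by simp, h1, h2⟩, ⟨a + (a + δ), by simp, h1, h2⟩]
  have hGle : ∀ x j : ℕ,
      ¬((a ≤ x ∧ j = G (x - a)) ∨ (a + δ ≤ x ∧ j = G (x - (a + δ))) ∨
        (a + (a + δ) ≤ x ∧ j = G (x - (a + (a + δ))))) → G x ≤ j := by
    intro x j hj
    rw [hG x]
    unfold mex
    exact Nat.sInf_le (show j ∈ {n | n ∉ _} from fun h => hj ((hT x j).1 h))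
  have hGnot : ∀ x : ℕ,
      ¬((a ≤ x ∧ G x = G (x - a)) ∨ (a + δ ≤ x ∧ G x = G (x - (a + δ))) ∨
        (a + (a + δ) ≤ x ∧ G x = G (x - (a + (a + δ))))) := by
    intro x hmem
    have hN : (G (x - a) + G (x - (a + δ)) + G (x - (a + (a + δ))) + 1) ∉
        {v | ∃ s ∈ ({a, a + δ, a + (a + δ)} : Set ℕ), s ≤ x ∧ v = G (x - s)} := by
      intro h
      rcases (hT x _).1 h with ⟨_, h2⟩|⟨_, h2⟩|⟨_, h2⟩ <;> omega
    have h2 : G x ∉ {v | ∃ s ∈ ({a, a + δ, a + (a + δ)} : Set ℕ), s ≤ x ∧ v = G (x - s)} := by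
      rw [hG x]
      unfold mex
      exact Nat.sInf_mem (⟨_, hN⟩ : Set.Nonempty {n | n ∉
        {v | ∃ s ∈ ({a, a + δ, a + (a + δ)} : Set ℕ), s ≤ x ∧ v = G (x - s)}})
    exact h2 ((hT x (G x)).2 hmem)
  have hGmem : ∀ x j : ℕ, j < G x →
      ((a ≤ x ∧ j = G (x - a)) ∨ (a + δ ≤ x ∧ j = G (x - (a + δ))) ∨
        (a + (a + δ) ≤ x ∧ j = G (x - (a + (a + δ))))) := by
    intro x j hj
    by_contra hc
    exact absurd (hGle x j hc) (by omega)
  -- the key characterization, by strong induction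
  have key : ∀ x : ℕ, (G x = 0 ↔ ∃ n, w a (a+δ) δ n = x) ∧
      (G x = 1 ↔ ∃ n, w a (a+δ) δ n + a = x) ∧
      (G x = 2 ↔ ∃ n, w a (a+δ) δ n = x + (a + δ)) := by
    intro x
    induction x using Nat.strong_induction_on with
    | _ x ih =>
    have c0a : (∃ n, w a (a+δ) δ n = x) → G x = 0 := by
      rintro ⟨n, hn⟩
      refine Nat.le_zero.mp (hGle x 0 ?_)
      rintro (⟨h1, h2⟩|⟨h1, h2⟩|⟨h1, h2⟩)
      · obtain ⟨n', hn'⟩ := ((ih (x - a) (by omega)).1).mp h2.symm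
        exact no_diff a δ ha hlt hlt2 n' n a (Or.inl rfl) (by omega)
      · obtain ⟨n', hn'⟩ := ((ih (x - (a + δ)) (by omega)).1).mp h2.symm
        exact no_diff a δ ha hlt hlt2 n' n (a + δ) (Or.inr (Or.inl rfl)) (by omega)
      · obtain ⟨n', hn'⟩ := ((ih (x - (a + (a + δ))) (by omega)).1).mp h2.symm
        exact no_diff a δ ha hlt hlt2 n' n (a + (a + δ)) (Or.inr (Or.inr rfl)) (by omega)
    have c0b : G x = 0 → ∃ n, w a (a+δ) δ n = x := by
      intro h0
      by_contra hno
      push_neg at hno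
      obtain ⟨m, s, hs, hsum⟩ := exists_move a δ ha hlt hlt2 x hno
      rcases hs with h|h|h
      · have h1 : G (x - a) = 0 := (ih (x - a) (by omega)).1.mpr ⟨m, by omega⟩
        exact hGnot x (Or.inl ⟨by omega, by omega⟩)
      · have h1 : G (x - (a + δ)) = 0 := (ih (x - (a + δ)) (by omega)).1.mpr ⟨m, by omega⟩
        exact hGnot x (Or.inr (Or.inl ⟨by omega, by omega⟩))
      · have h1 : G (x - (a + (a + δ))) = 0 :=
          (ih (x - (a + (a + δ))) (by omega)).1.mpr ⟨m, by omega⟩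
        exact hGnot x (Or.inr (Or.inr ⟨by omega, by omega⟩))
    have c1a : (∃ n, w a (a+δ) δ n + a = x) → G x = 1 := by
      rintro ⟨n, hn⟩
      have h0 : G (x - a) = 0 := (ih (x - a) (by omega)).1.mpr ⟨n, by omega⟩
      have h1T : ¬((a ≤ x ∧ (1:ℕ) = G (x - a)) ∨ (a + δ ≤ x ∧ (1:ℕ) = G (x - (a + δ))) ∨
          (a + (a + δ) ≤ x ∧ (1:ℕ) = G (x - (a + (a + δ))))) := by
        rintro (⟨h1, h2⟩|⟨h1, h2⟩|⟨h1, h2⟩)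
        · obtain ⟨n', hn'⟩ := (ih (x - a) (by omega)).2.1.mp h2.symm
          exact no_diff a δ ha hlt hlt2 n' n a (Or.inl rfl) (by omega)
        · obtain ⟨n', hn'⟩ := (ih (x - (a + δ)) (by omega)).2.1.mp h2.symm
          exact no_diff a δ ha hlt hlt2 n' n (a + δ) (Or.inr (Or.inl rfl)) (by omega)
        · obtain ⟨n', hn'⟩ := (ih (x - (a + (a + δ))) (by omega)).2.1.mp h2.symm
          exact no_diff a δ ha hlt hlt2 n' n (a + (a + δ)) (Or.inr (Or.inr rfl)) (by omega)
      have hle1 : G x ≤ 1 := hGle x 1 h1T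
      have hne0 : G x ≠ 0 := by
        intro h
        exact hGnot x (Or.inl ⟨by omega, by omega⟩)
      omega
    have c1b : G x = 1 → ∃ n, w a (a+δ) δ n + a = x := by
      intro h1
      have h0 := hGmem x 0 (by omega)
      have hax : a ≤ x := by rcases h0 with ⟨h, _⟩|⟨h, _⟩|⟨h, _⟩ <;> omega
      by_contra hno
      push_neg at hno
      have hGxa : G (x - a) = 0 := by
        refine Nat.le_zero.mp (hGle (x - a) 0 ?_)
        rintro (⟨k1, k2⟩|⟨k1, k2⟩|⟨k1, k2⟩)
        · obtain ⟨n0, hn0⟩ := (ih (x - a - a) (by omega)).1.mp k2.symm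
          have hg1 : G (x - a) = 1 := (ih (x - a) (by omega)).2.1.mpr ⟨n0, by omega⟩
          exact hGnot x (Or.inl ⟨by omega, by omega⟩)
        · obtain ⟨n0, hn0⟩ := (ih (x - a - (a + δ)) (by omega)).1.mp k2.symm
          have hg1 : G (x - (a + δ)) = 1 :=
            (ih (x - (a + δ)) (by omega)).2.1.mpr ⟨n0, by omega⟩
          exact hGnot x (Or.inr (Or.inl ⟨by omega, by omega⟩))
        · obtain ⟨n0, hn0⟩ := (ih (x - a - (a + (a + δ))) (by omega)).1.mp k2.symm
          have hg1 : G (x - (a + (a + δ))) = 1 :=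
            (ih (x - (a + (a + δ))) (by omega)).2.1.mpr ⟨n0, by omega⟩
          exact hGnot x (Or.inr (Or.inr ⟨by omega, by omega⟩))
      obtain ⟨n, hn⟩ := (ih (x - a) (by omega)).1.mp hGxa
      exact hno n (by omega)
    have c2a : (∃ n, w a (a+δ) δ n = x + (a + δ)) → G x = 2 := by
      rintro ⟨M, hM⟩
      have hxW : ∀ n, w a (a+δ) δ n ≠ x := fun n hn =>
        no_diff a δ ha hlt hlt2 n M (a + δ) (Or.inr (Or.inl rfl)) (by omega)
      -- 0 is an option value
      have h0T : (a ≤ x ∧ (0:ℕ) = G (x - a)) ∨ (a + δ ≤ x ∧ (0:ℕ) = G (x - (a + δ))) ∨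
          (a + (a + δ) ≤ x ∧ (0:ℕ) = G (x - (a + (a + δ)))) := by
        obtain ⟨m, s, hs, hsum⟩ := exists_move a δ ha hlt hlt2 x hxW
        rcases hs with h|h|h
        · exact Or.inl ⟨by omega, ((ih (x - a) (by omega)).1.mpr ⟨m, by omega⟩).symm⟩
        · exact Or.inr (Or.inl ⟨by omega,
            ((ih (x - (a + δ)) (by omega)).1.mpr ⟨m, by omega⟩).symm⟩)
        · exact Or.inr (Or.inr ⟨by omega,
            ((ih (x - (a + (a + δ))) (by omega)).1.mpr ⟨m, by omega⟩).symm⟩)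
      -- 1 is an option value
      have h1T : (a ≤ x ∧ (1:ℕ) = G (x - a)) ∨ (a + δ ≤ x ∧ (1:ℕ) = G (x - (a + δ))) ∨
          (a + (a + δ) ≤ x ∧ (1:ℕ) = G (x - (a + (a + δ)))) := by
        obtain ⟨m, s, hs, hsum⟩ := exists_one_move a δ ha hlt hlt2 x M hM
        rcases hs with h|h|h
        · exact Or.inl ⟨by omega, ((ih (x - a) (by omega)).2.1.mpr ⟨m, by omega⟩).symm⟩
        · exact Or.inr (Or.inl ⟨by omega,
            ((ih (x - (a + δ)) (by omega)).2.1.mpr ⟨m, by omega⟩).symm⟩)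
        · exact Or.inr (Or.inr ⟨by omega,
            ((ih (x - (a + (a + δ))) (by omega)).2.1.mpr ⟨m, by omega⟩).symm⟩)
      -- 2 is not an option value
      have h2T : ¬((a ≤ x ∧ (2:ℕ) = G (x - a)) ∨ (a + δ ≤ x ∧ (2:ℕ) = G (x - (a + δ))) ∨
          (a + (a + δ) ≤ x ∧ (2:ℕ) = G (x - (a + (a + δ))))) := by
        rintro (⟨k1, k2⟩|⟨k1, k2⟩|⟨k1, k2⟩)
        · obtain ⟨n2, hn2⟩ := (ih (x - a) (by omega)).2.2.mp k2.symm
          exact no_diff a δ ha hlt hlt2 n2 M a (Or.inl rfl) (by omega)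
        · obtain ⟨n2, hn2⟩ := (ih (x - (a + δ)) (by omega)).2.2.mp k2.symm
          exact no_diff a δ ha hlt hlt2 n2 M (a + δ) (Or.inr (Or.inl rfl)) (by omega)
        · obtain ⟨n2, hn2⟩ := (ih (x - (a + (a + δ))) (by omega)).2.2.mp k2.symm
          exact no_diff a δ ha hlt hlt2 n2 M (a + (a + δ)) (Or.inr (Or.inr rfl)) (by omega)
      have hle2 : G x ≤ 2 := hGle x 2 h2T
      have hne0 : G x ≠ 0 := by
        intro h
        rcases h0T with ⟨u1, u2⟩|⟨u1, u2⟩|⟨u1, u2⟩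
        · exact hGnot x (Or.inl ⟨u1, by omega⟩)
        · exact hGnot x (Or.inr (Or.inl ⟨u1, by omega⟩))
        · exact hGnot x (Or.inr (Or.inr ⟨u1, by omega⟩))
      have hne1 : G x ≠ 1 := by
        intro h
        rcases h1T with ⟨u1, u2⟩|⟨u1, u2⟩|⟨u1, u2⟩
        · exact hGnot x (Or.inl ⟨u1, by omega⟩)
        · exact hGnot x (Or.inr (Or.inl ⟨u1, by omega⟩))
        · exact hGnot x (Or.inr (Or.inr ⟨u1, by omega⟩))
      omega
    have c2b : G x = 2 → ∃ n, w a (a+δ) δ n = x + (a + δ) := by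
      intro h2
      by_contra hno
      push_neg at hno
      have hx0 : ∀ n, w a (a+δ) δ n ≠ x := by
        intro n hn
        have := c0a ⟨n, hn⟩
        omega
      have h1 := hGmem x 1 (by omega)
      have hwit : ∃ n, w a (a+δ) δ n = x + δ := by
        rcases h1 with ⟨k1, k2⟩|⟨k1, k2⟩|⟨k1, k2⟩
        · obtain ⟨m, hm⟩ := (ih (x - a) (by omega)).2.1.mp k2.symm
          exact q4 a δ ha hlt hlt2 x m (2 * a) (Or.inl rfl) (by omega) hx0 hno
        · obtain ⟨m, hm⟩ := (ih (x - (a + δ)) (by omega)).2.1.mp k2.symm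
          exact q4 a δ ha hlt hlt2 x m (2 * a + δ) (Or.inr (Or.inl rfl)) (by omega) hx0 hno
        · obtain ⟨m, hm⟩ := (ih (x - (a + (a + δ))) (by omega)).2.1.mp k2.symm
          exact q4 a δ ha hlt hlt2 x m (3 * a + δ) (Or.inr (Or.inr rfl)) (by omega) hx0 hno
      obtain ⟨n', hn'⟩ := hwit
      have hax : a ≤ x := by
        rcases h1 with ⟨k1, _⟩|⟨k1, _⟩|⟨k1, _⟩ <;> omega
      have hG2 : G (x - a) = 2 := (ih (x - a) (by omega)).2.2.mpr ⟨n', by omega⟩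
      exact hGnot x (Or.inl ⟨hax, by omega⟩)
    exact ⟨⟨c0b, c0a⟩, ⟨c1b, c1a⟩, ⟨c2b, c2a⟩⟩
  intro x hx
  obtain ⟨M, hM⟩ := hx
  exact (key x).2.2.mpr ⟨M, hM⟩
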